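/- For n = 3 the (p,q)-deformed Virasoro–Witt 3-bracket fails the Filippov fundamental identity over K = ℚ(p,q): there exist integers y₁, y₂, x₁, x₂, x₃ such that c₃(y₁,y₂, x₁+x₂+x₃)·c₃(x₁,x₂,x₃) ≠ c₃(y₁,y₂,x₁)·c₃(y₁+y₂+x₁, x₂, x₃) + c₃(y₁,y₂,x₂)·c₃(x₁, y₁+y₂+x₂, x₃) + c₃(y₁,y₂,x₃)·c₃(x₁, x₂, y₁+y₂+x₃) in K. -/

import Mathlib

/-- The structure constant `c_n(i_1,…,i_n) = (p q⁻¹)^{⌊(n−1)/2⌋·(i_1+⋯+i_n)} · det M`,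
where `M_{r,j} = p^{(r − 2⌊(n−1)/2⌋)·i_j} q^{r·i_j}` for `r = 0,…,n−1`, `j = 1,…,n`. -/
noncomputable def vwC {K : Type*} [Field K] (p q : K) (n : ℕ) (i : Fin n → ℤ) : K :=
  (p * q⁻¹) ^ (((((n - 1) / 2 : ℕ) : ℤ)) * ∑ j, i j) *
    Matrix.det (Matrix.of fun r j : Fin n =>
      p ^ (((r : ℤ) - 2 * (((n - 1) / 2 : ℕ) : ℤ)) * i j) * q ^ ((r : ℤ) * i j))

/-- The field `K = ℚ(p,q)` of rational functions in two variables over `ℚ`. -/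
abbrev Kpq : Type := FractionRing (MvPolynomial (Fin 2) ℚ)

/-- The image of the first variable `p` in `ℚ(p,q)`. -/
noncomputable def pVar : Kpq :=
  algebraMap (MvPolynomial (Fin 2) ℚ) Kpq (MvPolynomial.X 0)

/-- The image of the second variable `q` in `ℚ(p,q)`. -/
noncomputable def qVar : Kpq :=
  algebraMap (MvPolynomial (Fin 2) ℚ) Kpq (MvPolynomial.X 1)

lemma mono4 {K : Type*} [Field K] {p q : K} (hp : p ≠ 0) (hq : q ≠ 0)
    (a b c d : ℕ) (hc : c ≤ a) (hd : d ≤ b) :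
    p ^ a * q ^ b * p⁻¹ ^ c * q⁻¹ ^ d = p ^ (a - c) * q ^ (b - d) := by
  rw [inv_pow, inv_pow, pow_sub₀ p hp hc, pow_sub₀ q hq hd]
  field_simp

set_option maxHeartbeats 2000000 in
lemma cf019 {K : Type*} [Field K] (p q : K) (hp : p ≠ 0) (hq : q ≠ 0) :
    vwC p q 3 ![0, 1, 9] =
      (((p*q) - 1) * ((p*q)^9 - 1) * ((p*q)^9 - (p*q))) / (p*q)^10 := by
  simp only [vwC, Fin.sum_univ_three, Matrix.det_fin_three, Matrix.of_apply,
    Matrix.cons_val_zero, Matrix.cons_val_one, Matrix.head_cons,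
    Matrix.cons_val_two, Matrix.tail_cons]
  norm_num
  simp only [zpow_neg, zpow_ofNat, mul_pow, inv_pow]
  rw [eq_div_iff (mul_ne_zero (pow_ne_zero _ hp) (pow_ne_zero _ hq))]
  field_simp
  ring_nf

set_option maxHeartbeats 2000000 in
lemma cf234 {K : Type*} [Field K] (p q : K) (hp : p ≠ 0) (hq : q ≠ 0) :
    vwC p q 3 ![2, 3, 4] =
      (((p*q)^3 - (p*q)^2) * ((p*q)^4 - (p*q)^2) * ((p*q)^4 - (p*q)^3)) / (p*q)^9 := by
  simp only [vwC, Fin.sum_univ_three, Matrix.det_fin_three, Matrix.of_apply,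
    Matrix.cons_val_zero, Matrix.cons_val_one, Matrix.head_cons,
    Matrix.cons_val_two, Matrix.tail_cons]
  norm_num
  simp only [zpow_neg, zpow_ofNat, mul_pow, inv_pow]
  rw [eq_div_iff (mul_ne_zero (pow_ne_zero _ hp) (pow_ne_zero _ hq))]
  field_simp
  ring_nf

set_option maxHeartbeats 2000000 in
lemma cf014 {K : Type*} [Field K] (p q : K) (hp : p ≠ 0) (hq : q ≠ 0) :
    vwC p q 3 ![0, 1, 4] =
      (((p*q) - 1) * ((p*q)^4 - 1) * ((p*q)^4 - (p*q))) / (p*q)^5 := by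
  simp only [vwC, Fin.sum_univ_three, Matrix.det_fin_three, Matrix.of_apply,
    Matrix.cons_val_zero, Matrix.cons_val_one, Matrix.head_cons,
    Matrix.cons_val_two, Matrix.tail_cons]
  norm_num
  simp only [zpow_neg, zpow_ofNat, mul_pow, inv_pow]
  rw [eq_div_iff (mul_ne_zero (pow_ne_zero _ hp) (pow_ne_zero _ hq))]
  field_simp
  ring_nf

set_option maxHeartbeats 2000000 in
lemma cf235 {K : Type*} [Field K] (p q : K) (hp : p ≠ 0) (hq : q ≠ 0) :
    vwC p q 3 ![2, 3, 5] =
      (((p*q)^3 - (p*q)^2) * ((p*q)^5 - (p*q)^2) * ((p*q)^5 - (p*q)^3)) / (p*q)^10 := by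
  simp only [vwC, Fin.sum_univ_three, Matrix.det_fin_three, Matrix.of_apply,
    Matrix.cons_val_zero, Matrix.cons_val_one, Matrix.head_cons,
    Matrix.cons_val_two, Matrix.tail_cons]
  norm_num
  simp only [zpow_neg, zpow_ofNat, mul_pow, inv_pow]
  rw [eq_div_iff (mul_ne_zero (pow_ne_zero _ hp) (pow_ne_zero _ hq))]
  field_simp
  ring_nf

set_option maxHeartbeats 1000000 in
lemma z334 {K : Type*} [Field K] (p q : K) : vwC p q 3 ![3, 3, 4] = 0 := by
  simp only [vwC, Fin.sum_univ_three, Matrix.det_fin_three, Matrix.of_apply,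
    Matrix.cons_val_zero, Matrix.cons_val_one, Matrix.head_cons,
    Matrix.cons_val_two, Matrix.tail_cons]
  ring

set_option maxHeartbeats 1000000 in
lemma z244 {K : Type*} [Field K] (p q : K) : vwC p q 3 ![2, 4, 4] = 0 := by
  simp only [vwC, Fin.sum_univ_three, Matrix.det_fin_three, Matrix.of_apply,
    Matrix.cons_val_zero, Matrix.cons_val_one, Matrix.head_cons,
    Matrix.cons_val_two, Matrix.tail_cons]
  ring

set_option maxHeartbeats 2000000 in
theorem pq_three_bracket_not_filippov :
    ∃ y₁ y₂ x₁ x₂ x₃ : ℤ,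
      vwC pVar qVar 3 ![y₁, y₂, x₁ + x₂ + x₃] * vwC pVar qVar 3 ![x₁, x₂, x₃] ≠
        vwC pVar qVar 3 ![y₁, y₂, x₁] * vwC pVar qVar 3 ![y₁ + y₂ + x₁, x₂, x₃] +
        vwC pVar qVar 3 ![y₁, y₂, x₂] * vwC pVar qVar 3 ![x₁, y₁ + y₂ + x₂, x₃] +
        vwC pVar qVar 3 ![y₁, y₂, x₃] * vwC pVar qVar 3 ![x₁, x₂, y₁ + y₂ + x₃] := by
  refine ⟨0, 1, 2, 3, 4, ?_⟩
  have hp : pVar ≠ 0 := fun h =>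
    MvPolynomial.X_ne_zero (0 : Fin 2)
      ((IsFractionRing.to_map_eq_zero_iff (K := Kpq)).mp h)
  have hq : qVar ≠ 0 := fun h =>
    MvPolynomial.X_ne_zero (1 : Fin 2)
      ((IsFractionRing.to_map_eq_zero_iff (K := Kpq)).mp h)
  have hu : pVar * qVar ≠ 0 := mul_ne_zero hp hq
  norm_num
  rw [cf019 _ _ hp hq, cf234 _ _ hp hq, cf014 _ _ hp hq, cf235 _ _ hp hq,
    z334, z244, mul_zero, mul_zero, zero_add, zero_add]
  intro h
  rw [div_mul_div_comm, div_mul_div_comm,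
    div_eq_div_iff (mul_ne_zero (pow_ne_zero 10 hu) (pow_ne_zero 9 hu))
    (mul_ne_zero (pow_ne_zero 5 hu) (pow_ne_zero 10 hu))] at h
  -- h : V1*V2*u^15 = V3*V4*u^19  (after clearing; check shape below)
  have key := congrArg (MvPolynomial.eval (fun _ : Fin 2 => (2 : ℚ)))
    (IsFractionRing.injective (MvPolynomial (Fin 2) ℚ) Kpq
      (show (algebraMap (MvPolynomial (Fin 2) ℚ) Kpq)
        (((MvPolynomial.X 0 * MvPolynomial.X 1 - 1) *
          ((MvPolynomial.X 0 * MvPolynomial.X 1)^9 - 1) *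
          ((MvPolynomial.X 0 * MvPolynomial.X 1)^9 - MvPolynomial.X 0 * MvPolynomial.X 1)) *
          (((MvPolynomial.X 0 * MvPolynomial.X 1)^3 - (MvPolynomial.X 0 * MvPolynomial.X 1)^2) *
           ((MvPolynomial.X 0 * MvPolynomial.X 1)^4 - (MvPolynomial.X 0 * MvPolynomial.X 1)^2) *
           ((MvPolynomial.X 0 * MvPolynomial.X 1)^4 - (MvPolynomial.X 0 * MvPolynomial.X 1)^3)) *
          ((MvPolynomial.X 0 * MvPolynomial.X 1)^5 * (MvPolynomial.X 0 * MvPolynomial.X 1)^10)) =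
        (algebraMap (MvPolynomial (Fin 2) ℚ) Kpq)
        (((MvPolynomial.X 0 * MvPolynomial.X 1 - 1) *
          ((MvPolynomial.X 0 * MvPolynomial.X 1)^4 - 1) *
          ((MvPolynomial.X 0 * MvPolynomial.X 1)^4 - MvPolynomial.X 0 * MvPolynomial.X 1)) *
          (((MvPolynomial.X 0 * MvPolynomial.X 1)^3 - (MvPolynomial.X 0 * MvPolynomial.X 1)^2) *
           ((MvPolynomial.X 0 * MvPolynomial.X 1)^5 - (MvPolynomial.X 0 * MvPolynomial.X 1)^2) *
           ((MvPolynomial.X 0 * MvPolynomial.X 1)^5 - (MvPolynomial.X 0 * MvPolynomial.X 1)^3)) *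
          ((MvPolynomial.X 0 * MvPolynomial.X 1)^10 * (MvPolynomial.X 0 * MvPolynomial.X 1)^9))
        by
          simp only [map_mul, map_pow, map_sub, map_one]
          simp only [pVar, qVar] at h
          exact h))
  simp only [map_mul, map_pow, map_sub, map_one, MvPolynomial.eval_X] at key
  norm_num at key
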